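/- Let d be a hemimetric on X and let R be a relation between points and subsets of X with x R {x} for all x. Define the distance Rd(x,y) = sup over d-directed sets Z and points z with z R Z of (inf_{w∈Z} d(x,w) − d(y,z))₊. Then d ≤ Rd, Rd(x,y) ≤ Rd(x,w) + d(w,y), and Rd(x,y) ≤ d(x,w) + Rd(w,y) for all x,y,w ∈ X; in particular Rd satisfies the triangle inequality. -/

import Mathlib

open ENNReal NNReal Filter Set

/-- `Z ⊆ X` is `d`-directed: for every finite `F ⊆ Z`,
`⨅ z ∈ Z, ⨆ f ∈ F, d f z = 0` (with `inf ∅ = ∞`, so `Z` is nonempty). -/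
def DDirected {X : Type} (d : X → X → ℝ≥0∞) (Z : Set X) : Prop :=
  ∀ F : Finset X, ↑F ⊆ Z → (⨅ z ∈ Z, ⨆ f ∈ F, d f z) = 0

/-- The relational way-below distance: `Rd(x,y)` is the supremum over `d`-directed
sets `Z` and points `z` with `z R Z` of `(⨅ w ∈ Z, d x w) - d y z`. -/
noncomputable def Rd {X : Type} (d : X → X → ℝ≥0∞) (R : X → Set X → Prop)
    (x y : X) : ℝ≥0∞ :=
  sSup { v | ∃ (Z : Set X) (z : X), DDirected d Z ∧ R z Z ∧
    v = (⨅ w ∈ Z, d x w) - d y z }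

/-- For a hemimetric `d` and any relation `R` with `x R {x}` for all `x`,
`d ≤ Rd`, `Rd(x,y) ≤ Rd(x,w) + d(w,y)` and `Rd(x,y) ≤ d(x,w) + Rd(w,y)`;
in particular `Rd` satisfies the triangle inequality. -/
theorem Rd_props {X : Type} (d : X → X → ℝ≥0∞) (R : X → Set X → Prop)
    (href : ∀ x, d x x = 0) (htri : ∀ x y z, d x z ≤ d x y + d y z)
    (hR : ∀ x, R x {x}) :
    (∀ x y, d x y ≤ Rd d R x y) ∧
    (∀ x y w, Rd d R x y ≤ Rd d R x w + d w y) ∧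
    (∀ x y w, Rd d R x y ≤ d x w + Rd d R w y) := by
  refine ⟨?_, ?_, ?_⟩
  · intro x y
    apply le_sSup
    refine ⟨{y}, y, ?_, hR y, ?_⟩
    · intro F hF
      have h1 : (⨅ z ∈ ({y} : Set X), ⨆ f ∈ F, d f z) = ⨆ f ∈ F, d f y := by simp
      rw [h1]
      refine le_antisymm (iSup₂_le fun f hf => ?_) zero_le
      have : f = y := by simpa using hF hf
      simp [this, href y]
    · simp [href y]
  · intro x y w
    apply sSup_le
    rintro v ⟨Z, z, hZ, hz, rfl⟩
    have h1 : (⨅ u ∈ Z, d x u) - d w z ≤ Rd d R x w := le_sSup ⟨Z, z, hZ, hz, rfl⟩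
    calc (⨅ u ∈ Z, d x u) - d y z
        ≤ ((⨅ u ∈ Z, d x u) - d w z) + d w y := by
          rw [tsub_le_iff_right]
          calc (⨅ u ∈ Z, d x u)
              ≤ ((⨅ u ∈ Z, d x u) - d w z) + d w z := le_tsub_add
            _ ≤ ((⨅ u ∈ Z, d x u) - d w z) + (d w y + d y z) := by
                gcongr; exact htri w y z
            _ = ((⨅ u ∈ Z, d x u) - d w z) + d w y + d y z := by ring
      _ ≤ Rd d R x w + d w y := by gcongr
  · intro x y w
    apply sSup_le
    rintro v ⟨Z, z, hZ, hz, rfl⟩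
    have h1 : (⨅ u ∈ Z, d w u) - d y z ≤ Rd d R w y := le_sSup ⟨Z, z, hZ, hz, rfl⟩
    have h2 : (⨅ u ∈ Z, d x u) ≤ d x w + ⨅ u ∈ Z, d w u := by
      rw [show (⨅ u ∈ Z, d x u) = ⨅ u : Z, d x u from (iInf_subtype'' Z _).symm,
        show (⨅ u ∈ Z, d w u) = ⨅ u : Z, d w u from (iInf_subtype'' Z _).symm,
        ENNReal.add_iInf]
      exact le_iInf fun u => iInf_le_of_le u (htri x w u)
    calc (⨅ u ∈ Z, d x u) - d y z
        ≤ (d x w + ⨅ u ∈ Z, d w u) - d y z := by gcongr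
      _ ≤ d x w + ((⨅ u ∈ Z, d w u) - d y z) := add_tsub_le_assoc
      _ ≤ d x w + Rd d R w y := by gcongr
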